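/- Let a, ℓ, m be positive integers with ((ℓ, m)) ≤ a (so that G_m(ℓ, a) is nonempty). Then the gcd of all elements of G_m(ℓ, a) equals ((ℓ, m)). -/

import Mathlib

/-- `((ℓ, m)) = ∏_{p prime, p ∣ ℓ} p ^ ν_p(m)`. -/
def dblParen (ℓ m : ℕ) : ℕ := ∏ p ∈ ℓ.primeFactors, p ^ (m.factorization p)

/-- `G_m(ℓ, a) = { g ∈ ℕ, g ≥ 1 : g ≤ a and gcd(g·ℓ, m) = g }`. -/
def Gset (m ℓ a : ℕ) : Finset ℕ :=
  (Finset.Icc 1 a).filter (fun g => Nat.gcd (g * ℓ) m = g)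


lemma dblParen_pos (ℓ m : ℕ) : 0 < dblParen ℓ m := by
  apply Finset.prod_pos
  intro p hp
  exact pow_pos (Nat.prime_of_mem_primeFactors hp).pos _

lemma dblParen_factorization (ℓ m q : ℕ) :
    (dblParen ℓ m).factorization q =
      if q ∈ ℓ.primeFactors then m.factorization q else 0 := by
  rw [dblParen, Nat.factorization_prod]
  · rw [Finsupp.finset_sum_apply]
    rw [Finset.sum_congr rfl (fun p hp => by
      rw [(Nat.prime_of_mem_primeFactors hp).factorization_pow, Finsupp.single_apply])]
    exact Finset.sum_ite_eq' _ _ _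
  · intro p hp
    exact pow_ne_zero _ (Nat.prime_of_mem_primeFactors hp).pos.ne'

theorem gcd_of_Gset_eq_dblParen (a ℓ m : ℕ) (ha : 0 < a) (hℓ : 0 < ℓ) (hm : 0 < m)
    (hle : dblParen ℓ m ≤ a) :
    (Gset m ℓ a).gcd id = dblParen ℓ m := by
  set D := dblParen ℓ m with hD
  have hDpos := dblParen_pos ℓ m
  have hDmem : D ∈ Gset m ℓ a := by
    simp only [Gset, Finset.mem_filter, Finset.mem_Icc]
    refine ⟨⟨hDpos, hle⟩, ?_⟩
    apply Nat.eq_of_factorization_eq (Nat.gcd_ne_zero_left (by positivity)) hDpos.ne'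
    intro q
    rw [Nat.factorization_gcd (by positivity) hm.ne', Finsupp.inf_apply,
      Nat.factorization_mul hDpos.ne' hℓ.ne', Finsupp.add_apply]
    rw [dblParen_factorization]
    by_cases hq : q ∈ ℓ.primeFactors
    · simp [hq, min_eq_right]
    · have : ℓ.factorization q = 0 := by
        by_contra h
        exact hq (Nat.support_factorization ℓ ▸ Finsupp.mem_support_iff.mpr h)
      simp [hq, this]
  refine Nat.dvd_antisymm (Finset.gcd_dvd hDmem) (Finset.dvd_gcd ?_)
  intro g hg
  simp only [Gset, Finset.mem_filter, Finset.mem_Icc] at hg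
  obtain ⟨⟨hg1, _⟩, hgcd⟩ := hg
  have hgne : g ≠ 0 := by omega
  rw [id]
  rw [← Nat.factorization_le_iff_dvd hDpos.ne' hgne]
  intro q
  rw [dblParen_factorization]
  by_cases hq : q ∈ ℓ.primeFactors
  · have hℓq : 1 ≤ ℓ.factorization q :=
      (Nat.prime_of_mem_primeFactors hq).factorization_pos_of_dvd hℓ.ne'
        (Nat.dvd_of_mem_primeFactors hq)
    have key : min (g.factorization q + ℓ.factorization q) (m.factorization q)
        = g.factorization q := by
      conv_rhs => rw [← hgcd]
      rw [Nat.factorization_gcd (mul_ne_zero hgne hℓ.ne') hm.ne', Finsupp.inf_apply,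
        Nat.factorization_mul hgne hℓ.ne', Finsupp.add_apply]
    simp only [hq, if_true]
    omega
  · simp [hq]
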